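/- Let $G$ be a graph on $n$ vertices and define $\mathrm{TH}(G) = \{x \in \mathbb{R}_+^n : \exists X \in \mathbb{S}_+^{1+n},\ X_{00} = 1,\ X_{ii} = X_{0i}\ \forall i,\ X_{ij} = 0\ \forall ij \in E\}$. Then $x \in \mathrm{TH}(G)$ if and only if there exist unit vectors $d, w_1, \ldots, w_n$ in some real inner product space such that $x_i = \langle d, w_i\rangle^2$ for all $i$ and $\langle w_i, w_j\rangle = 0$ for all edges $ij \in E$. -/

import Mathlib

open Finset

theorem theta_body_iff_orthonormal_representation
    (n : ℕ) (G : SimpleGraph (Fin n)) (x : Fin n → ℝ) :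
    ((∀ i, 0 ≤ x i) ∧
      ∃ X : Matrix (Fin 1 ⊕ Fin n) (Fin 1 ⊕ Fin n) ℝ,
        X.PosSemidef ∧
        X (Sum.inl 0) (Sum.inl 0) = 1 ∧
        (∀ i, X (Sum.inr i) (Sum.inr i) = X (Sum.inl 0) (Sum.inr i)) ∧
        (∀ i j, G.Adj i j → X (Sum.inr i) (Sum.inr j) = 0) ∧
        (∀ i, X (Sum.inr i) (Sum.inr i) = x i)) ↔
    (∃ (E : Type) (_ : NormedAddCommGroup E) (_ : InnerProductSpace ℝ E)
        (d : E) (w : Fin n → E),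
        ‖d‖ = 1 ∧ (∀ i, ‖w i‖ = 1) ∧
        (∀ i, x i = (inner ℝ d (w i) : ℝ) ^ 2) ∧
        (∀ i j, G.Adj i j → (inner ℝ (w i) (w j) : ℝ) = 0)) := by
  constructor
  · rintro ⟨hx, X, hX, h00, hdiag, hedge, hxi⟩
    obtain ⟨B, hB⟩ : ∃ B : Matrix (Fin 1 ⊕ Fin n) (Fin 1 ⊕ Fin n) ℝ, X = Matrix.conjTranspose B * B := by
      open scoped MatrixOrder in
      (have h0 : 0 ≤ X := Matrix.nonneg_iff_posSemidef.mpr hX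
       obtain ⟨B, hB1, -, hB⟩ := CFC.exists_sqrt_of_isSelfAdjoint_of_quasispectrumRestricts
         (a := X) hX.isHermitian (QuasispectrumRestricts.nnreal_of_nonneg h0)
       exact ⟨B, by rw [← Matrix.star_eq_conjTranspose, hB1.star_eq]; exact hB.symm⟩)
    -- embed columns of B into EuclideanSpace ℝ ((Fin 1 ⊕ Fin n) ⊕ Fin n)
    set u : (Fin 1 ⊕ Fin n) → EuclideanSpace ℝ ((Fin 1 ⊕ Fin n) ⊕ Fin n) :=
      fun a => WithLp.toLp 2 (fun k => Sum.elim (fun b => B b a) (fun _ => 0) k) with hu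
    have hinner : ∀ a b, (inner ℝ (u a) (u b) : ℝ) = X a b := by
      intro a b
      rw [hB]
      simp [hu, PiLp.inner_apply, Fintype.sum_sum_type, Matrix.mul_apply,
        Matrix.conjTranspose_apply, mul_comm]
    -- extra orthonormal vectors
    set e : Fin n → EuclideanSpace ℝ ((Fin 1 ⊕ Fin n) ⊕ Fin n) := fun i => EuclideanSpace.single (Sum.inr i) 1 with he
    have hue : ∀ a i, (inner ℝ (u a) (e i) : ℝ) = 0 := by
      intro a i
      simp [he, EuclideanSpace.inner_single_right, hu]
    have heu : ∀ a i, (inner ℝ (e i) (u a) : ℝ) = 0 := by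
      intro a i; rw [real_inner_comm]; exact hue a i
    have hee : ∀ i j, (inner ℝ (e i) (e j) : ℝ) = (if i = j then (1:ℝ) else 0) := by
      intro i j
      simp [he, EuclideanSpace.inner_single_right, EuclideanSpace.single_apply,
        Sum.inr.injEq, eq_comm]
    set d := u (Sum.inl 0) with hd
    have hdnorm : ‖d‖ = 1 := by
      have : (inner ℝ d d : ℝ) = 1 := by rw [hd, hinner, h00]
      have h2 := real_inner_self_eq_norm_sq d
      nlinarith [norm_nonneg d]
    classical
    set w : Fin n → EuclideanSpace ℝ ((Fin 1 ⊕ Fin n) ⊕ Fin n) :=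
      fun i => if x i = 0 then e i else (Real.sqrt (x i))⁻¹ • u (Sum.inr i) with hw
    have hdw : ∀ i, (inner ℝ d (w i) : ℝ) = Real.sqrt (x i) := by
      intro i
      rw [hw]
      by_cases h : x i = 0
      · simp [h, hue, hd]
      · have hpos : 0 < x i := lt_of_le_of_ne (hx i) (Ne.symm h)
        simp only [h, if_false, real_inner_smul_right, hd, hinner]
        rw [← hdiag i, hxi i]
        rw [inv_mul_eq_div, Real.div_sqrt]
    have hwnorm : ∀ i, ‖w i‖ = 1 := by
      intro i
      have : (inner ℝ (w i) (w i) : ℝ) = 1 := by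
        rw [hw]
        by_cases h : x i = 0
        · simp [h, hee, he]
        · have hpos : 0 < x i := lt_of_le_of_ne (hx i) (Ne.symm h)
          simp only [h, if_false, real_inner_smul_right, real_inner_smul_left, hinner, hxi i]
          have hs : Real.sqrt (x i) * Real.sqrt (x i) = x i := Real.mul_self_sqrt (hx i)
          field_simp
          exact (Real.sq_sqrt (hx i)).symm
      have h2 := real_inner_self_eq_norm_sq (w i)
      nlinarith [norm_nonneg (w i)]
    refine ⟨EuclideanSpace ℝ ((Fin 1 ⊕ Fin n) ⊕ Fin n), inferInstance, inferInstance, d, w, hdnorm, hwnorm, ?_, ?_⟩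
    · intro i
      rw [hdw i, Real.sq_sqrt (hx i)]
    · intro i j hij
      simp only [hw]
      by_cases hi : x i = 0 <;> by_cases hj : x j = 0
      · rw [if_pos hi, if_pos hj, hee, if_neg hij.ne]
      · rw [if_pos hi, if_neg hj, real_inner_smul_right, heu, mul_zero]
      · rw [if_neg hi, if_pos hj, real_inner_smul_left, hue, mul_zero]
      · rw [if_neg hi, if_neg hj, real_inner_smul_right, real_inner_smul_left, hinner,
          hedge i j hij, mul_zero, mul_zero]
  · rintro ⟨E, _, _, d, w, hd, hw, hxw, horth⟩
    classical
    set v : Fin 1 ⊕ Fin n → E :=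
      Sum.elim (fun _ => d) (fun i => (inner ℝ d (w i) : ℝ) • w i) with hv
    refine ⟨fun i => by rw [hxw i]; positivity,
      Matrix.of (fun a b => (inner ℝ (v a) (v b) : ℝ)), (Matrix.posSemidef_iff_dotProduct_mulVec.mpr ⟨?_, ?_⟩), ?_, ?_, ?_, ?_⟩
    · ext a b
      simp [Matrix.conjTranspose_apply, real_inner_comm]
    · intro y
      have key : dotProduct (star y)
          (Matrix.mulVec (Matrix.of fun a b => (inner ℝ (v a) (v b) : ℝ)) y)
          = (inner ℝ (∑ a, y a • v a) (∑ a, y a • v a) : ℝ) := by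
        rw [sum_inner]
        simp only [dotProduct, Matrix.mulVec, Matrix.of_apply, star_trivial,
          real_inner_smul_left, inner_sum, real_inner_smul_right, dotProduct]
        refine Finset.sum_congr rfl fun a _ => ?_
        rw [Finset.mul_sum]
        exact Finset.sum_congr rfl fun b _ => by ring
      rw [key]
      exact real_inner_self_nonneg
    · simp [hv, real_inner_self_eq_norm_sq, hd]
    · intro i
      simp [hv, real_inner_smul_left, real_inner_smul_right, real_inner_self_eq_norm_sq,
        norm_smul, hw i, sq_abs, Real.norm_eq_abs, real_inner_comm d (w i)]
      ring
    · intro i j hij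
      simp [hv, real_inner_smul_left, real_inner_smul_right, horth i j hij]
    · intro i
      simp [hv, real_inner_smul_left, real_inner_smul_right, real_inner_self_eq_norm_sq,
        norm_smul, hw i, sq_abs, Real.norm_eq_abs, hxw i, real_inner_comm d (w i)]
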